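/- Let V₁, V₂ be Hilbert spaces and a : V₁ × V₂ → ℝ a bounded bilinear form. Define on V = V₁ × V₂ (with product norm ‖v‖² = ‖v₁‖₁² + ‖v₂‖₂²) the symmetric-like bilinear form 𝐚(v, φ) = a(v₁, φ₂) + a(φ₁, v₂). Then sup over ‖v‖ = 1 and ‖φ‖ = 1 of |𝐚(v, φ)| equals M_a, where M_a = sup over ‖v₁‖₁ = 1, ‖v₂‖₂ = 1 of |a(v₁, v₂)|. -/

import Mathlib

theorem stmt3 {V₁ V₂ : Type*}
    [NormedAddCommGroup V₁] [InnerProductSpace ℝ V₁] [CompleteSpace V₁]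
    [NormedAddCommGroup V₂] [InnerProductSpace ℝ V₂] [CompleteSpace V₂]
    (a : V₁ →ₗ[ℝ] V₂ →ₗ[ℝ] ℝ) (Ma : ℝ)
    (hMa : IsLUB {x : ℝ | ∃ v₁ : V₁, ∃ v₂ : V₂, ‖v₁‖ = 1 ∧ ‖v₂‖ = 1 ∧ x = |a v₁ v₂|} Ma) :
    IsLUB {x : ℝ | ∃ v φ : WithLp 2 (V₁ × V₂), ‖v‖ = 1 ∧ ‖φ‖ = 1 ∧
      x = |a (WithLp.equiv 2 (V₁ × V₂) v).1 (WithLp.equiv 2 (V₁ × V₂) φ).2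
           + a (WithLp.equiv 2 (V₁ × V₂) φ).1 (WithLp.equiv 2 (V₁ × V₂) v).2|} Ma := by
  -- the old set is nonempty
  have hne : ∃ x, ∃ v₁ : V₁, ∃ v₂ : V₂, ‖v₁‖ = 1 ∧ ‖v₂‖ = 1 ∧ x = |a v₁ v₂| := by
    by_contra h
    push_neg at h
    have h1 : Ma ≤ Ma - 1 := hMa.2 (fun x hx => by
      obtain ⟨v₁, v₂, h1, h2, h3⟩ := hx
      exact absurd h3 (h x v₁ v₂ h1 h2))
    linarith
  obtain ⟨x₀, w₁, w₂, hw₁, hw₂, hx₀⟩ := hne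
  have hMa0 : 0 ≤ Ma := le_trans (by rw [hx₀] at *; positivity) (hMa.1 ⟨w₁, w₂, hw₁, hw₂, hx₀⟩)
  -- boundedness: |a x y| ≤ Ma ‖x‖ ‖y‖
  have hbdd : ∀ (x : V₁) (y : V₂), |a x y| ≤ Ma * ‖x‖ * ‖y‖ := by
    intro x y
    rcases eq_or_ne x 0 with rfl | hx
    · simp
    rcases eq_or_ne y 0 with rfl | hy
    · simp
    have hx' : ‖x‖ ≠ 0 := norm_ne_zero_iff.mpr hx
    have hy' : ‖y‖ ≠ 0 := norm_ne_zero_iff.mpr hy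
    have hmem : |a (‖x‖⁻¹ • x) (‖y‖⁻¹ • y)| ≤ Ma := by
      refine hMa.1 ⟨‖x‖⁻¹ • x, ‖y‖⁻¹ • y, ?_, ?_, rfl⟩
      · rw [norm_smul]; simp [hx']
      · rw [norm_smul]; simp [hy']
    have heq : |a (‖x‖⁻¹ • x) (‖y‖⁻¹ • y)| = ‖x‖⁻¹ * ‖y‖⁻¹ * |a x y| := by
      simp [map_smul, smul_eq_mul, abs_mul,
        abs_of_nonneg (inv_nonneg.mpr (norm_nonneg x)),
        abs_of_nonneg (inv_nonneg.mpr (norm_nonneg y)), mul_assoc]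
      ring
    rw [heq] at hmem
    have hxn : 0 < ‖x‖ := (norm_pos_iff).mpr hx
    have hyn : 0 < ‖y‖ := (norm_pos_iff).mpr hy
    calc |a x y| = (‖x‖ * ‖y‖) * (‖x‖⁻¹ * ‖y‖⁻¹ * |a x y|) := by
          field_simp
      _ ≤ (‖x‖ * ‖y‖) * Ma := mul_le_mul_of_nonneg_left hmem (by positivity)
      _ = Ma * ‖x‖ * ‖y‖ := by ring
  constructor
  · -- Ma is an upper bound of the new set
    rintro x ⟨v, φ, hv, hφ, rfl⟩
    have hv2 : ‖v.fst‖ ^ 2 + ‖v.snd‖ ^ 2 = 1 := by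
      have := WithLp.prod_norm_sq_eq_of_L2 v; rw [hv] at this; simpa using this.symm
    have hφ2 : ‖φ.fst‖ ^ 2 + ‖φ.snd‖ ^ 2 = 1 := by
      have := WithLp.prod_norm_sq_eq_of_L2 φ; rw [hφ] at this; simpa using this.symm
    have h1 := hbdd v.fst φ.snd
    have h2 := hbdd φ.fst v.snd
    have htri := abs_add_le (a v.fst φ.snd) (a φ.fst v.snd)
    have hkey : ‖v.fst‖ * ‖φ.snd‖ + ‖φ.fst‖ * ‖v.snd‖ ≤ 1 := by
      nlinarith [sq_nonneg (‖v.fst‖ - ‖φ.snd‖), sq_nonneg (‖φ.fst‖ - ‖v.snd‖)]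
    have : |a (WithLp.equiv 2 (V₁ × V₂) v).1 (WithLp.equiv 2 (V₁ × V₂) φ).2
           + a (WithLp.equiv 2 (V₁ × V₂) φ).1 (WithLp.equiv 2 (V₁ × V₂) v).2|
        = |a v.fst φ.snd + a φ.fst v.snd| := rfl
    rw [this]
    calc |a v.fst φ.snd + a φ.fst v.snd| ≤ |a v.fst φ.snd| + |a φ.fst v.snd| := htri
      _ ≤ Ma * ‖v.fst‖ * ‖φ.snd‖ + Ma * ‖φ.fst‖ * ‖v.snd‖ := by linarith
      _ = Ma * (‖v.fst‖ * ‖φ.snd‖ + ‖φ.fst‖ * ‖v.snd‖) := by ring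
      _ ≤ Ma * 1 := by nlinarith
      _ = Ma := mul_one Ma
  · -- least upper bound
    intro b hb
    refine hMa.2 ?_
    rintro x ⟨v₁, v₂, h1, h2, rfl⟩
    refine hb ⟨(WithLp.equiv 2 (V₁ × V₂)).symm (v₁, 0),
      (WithLp.equiv 2 (V₁ × V₂)).symm (0, v₂), ?_, ?_, ?_⟩
    · rw [WithLp.prod_norm_eq_of_L2]; simp [h1]
    · rw [WithLp.prod_norm_eq_of_L2]; simp [h2]
    · simp
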